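/- If a tensor ψ can be written as a finite sum ψ = Σ_{k=1}^q ψ^k of rank-1 tensors ψ^k (each of the form (ψ^k)_x = ∏_{j=1}^p θ^{(k,j)}_{x_j} for real vectors θ^{(k,j)} ∈ ℝ^{r_j}), then ‖ψ‖_± ≤ Σ_{k=1}^q ‖ψ^k‖_max. -/

import Mathlib

open Set Pointwise

noncomputable section

/-- The set `B_λ` of rank-1 tensors whose factor entries lie in `[-1,1]`, scaled by `λ`. -/
def setB (p : ℕ) (r : Fin p → ℕ) (lam : ℝ) :
    Set (((i : Fin p) → Fin (r i)) → ℝ) :=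
  {ψ | ∃ θ : (k : Fin p) → Fin (r k) → ℝ,
    (∀ k j, -1 ≤ θ k j ∧ θ k j ≤ 1) ∧
    ∀ x, ψ x = lam * ∏ k, θ k (x k)}

/-- The set `S_λ` of rank-1 tensors whose factor entries lie in `{-1,1}`, scaled by `λ`. -/
def setS (p : ℕ) (r : Fin p → ℕ) (lam : ℝ) :
    Set (((i : Fin p) → Fin (r i)) → ℝ) :=
  {ψ | ∃ θ : (k : Fin p) → Fin (r k) → ℝ,
    (∀ k j, θ k j = -1 ∨ θ k j = 1) ∧
    ∀ x, ψ x = lam * ∏ k, θ k (x k)}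

/-- `C_λ := conv(S_λ)`. -/
def setC (p : ℕ) (r : Fin p → ℕ) (lam : ℝ) :
    Set (((i : Fin p) → Fin (r i)) → ℝ) :=
  convexHull ℝ (setS p r lam)

/-- The gauge norm `‖ψ‖_± = inf {λ ≥ 0 : ψ ∈ λ • C_1}`. -/
def gaugeNorm {p : ℕ} {r : Fin p → ℕ} (ψ : ((i : Fin p) → Fin (r i)) → ℝ) : ℝ :=
  sInf {lam : ℝ | 0 ≤ lam ∧ ψ ∈ lam • setC p r 1}

/-- The max norm `‖ψ‖_max = max_x |ψ_x|`. -/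
def maxNorm {p : ℕ} {r : Fin p → ℕ} (ψ : ((i : Fin p) → Fin (r i)) → ℝ) : ℝ :=
  ⨆ x, |ψ x|

/-- if `ψ = Σ_{k=1}^q ψ^k` with each `ψ^k` rank-1, then
`‖ψ‖_± ≤ Σ_k ‖ψ^k‖_max`. -/
theorem box_mem_conv (p : ℕ) (r : Fin p → ℕ)
    (θ : (k : Fin p) → Fin (r k) → ℝ)
    (hθ : ∀ k j, -1 ≤ θ k j ∧ θ k j ≤ 1) :
    (fun x => ∏ k, θ k (x k)) ∈ setC p r 1 := by
  classical
  suffices h : ∀ (s : Finset ((k : Fin p) × Fin (r k))) (θ : (k : Fin p) → Fin (r k) → ℝ),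
      (∀ k j, -1 ≤ θ k j ∧ θ k j ≤ 1) →
      (∀ k j, (⟨k, j⟩ : (k : Fin p) × Fin (r k)) ∉ s → θ k j = -1 ∨ θ k j = 1) →
      (fun x => ∏ k, θ k (x k)) ∈ setC p r 1 by
    exact h Finset.univ θ hθ (fun k j hk => absurd (Finset.mem_univ _) hk)
  intro s
  induction s using Finset.cons_induction with
  | empty =>
    intro θ hθ hs
    apply subset_convexHull
    exact ⟨θ, fun k j => hs k j (Finset.notMem_empty _), fun x => (one_mul _).symm⟩
  | cons a s ha ih =>
    intro θ hθ hs
    obtain ⟨k0, j0⟩ := a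
    set t : ℝ := (θ k0 j0 + 1) / 2 with htdef
    set θp := Function.update θ k0 (Function.update (θ k0) j0 1) with hθpdef
    set θm := Function.update θ k0 (Function.update (θ k0) j0 (-1)) with hθmdef
    have hval : θp k0 j0 = 1 ∧ θm k0 j0 = -1 := by
      simp [θp, θm]
    have hne : ∀ (k : Fin p) (j : Fin (r k)),
        (⟨k, j⟩ : (k : Fin p) × Fin (r k)) ≠ ⟨k0, j0⟩ →
        θp k j = θ k j ∧ θm k j = θ k j := by
      intro k j hkj
      by_cases hk : k = k0
      · subst hk
        have hj : j ≠ j0 := by simpa using hkj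
        simp [θp, θm, Function.update_of_ne hj]
      · simp [θp, θm, Function.update_of_ne hk]
    have hbox : ∀ (f : (k : Fin p) → Fin (r k) → ℝ), f k0 j0 = 1 ∨ f k0 j0 = -1 →
        (∀ k j, (⟨k, j⟩ : (k : Fin p) × Fin (r k)) ≠ ⟨k0, j0⟩ → f k j = θ k j) →
        (∀ k j, -1 ≤ f k j ∧ f k j ≤ 1) ∧
        (∀ k j, (⟨k, j⟩ : (k : Fin p) × Fin (r k)) ∉ s → f k j = -1 ∨ f k j = 1) := by
      intro f hf00 hfne
      constructor
      · intro k j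
        by_cases hkj : (⟨k, j⟩ : (k : Fin p) × Fin (r k)) = ⟨k0, j0⟩
        · obtain ⟨hk, hj⟩ := Sigma.mk.inj_iff.mp hkj
          subst hk
          have hj' : j = j0 := by simpa using hj
          subst hj'
          rcases hf00 with h | h <;> rw [h] <;> norm_num
        · rw [hfne k j hkj]; exact hθ k j
      · intro k j hkjs
        by_cases hkj : (⟨k, j⟩ : (k : Fin p) × Fin (r k)) = ⟨k0, j0⟩
        · obtain ⟨hk, hj⟩ := Sigma.mk.inj_iff.mp hkj
          subst hk
          have hj' : j = j0 := by simpa using hj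
          subst hj'
          rcases hf00 with h | h
          · exact Or.inr h
          · exact Or.inl h
        · rw [hfne k j hkj]
          apply hs
          rw [Finset.mem_cons]
          push_neg
          exact ⟨hkj, hkjs⟩
    obtain ⟨hpbox, hpout⟩ := hbox θp (Or.inl hval.1) (fun k j h => (hne k j h).1)
    obtain ⟨hmbox, hmout⟩ := hbox θm (Or.inr hval.2) (fun k j h => (hne k j h).2)
    have hp := ih θp hpbox hpout
    have hm := ih θm hmbox hmout
    have ht0 : 0 ≤ t := by have := (hθ k0 j0).1; rw [htdef]; linarith
    have ht1 : 0 ≤ 1 - t := by have := (hθ k0 j0).2; rw [htdef]; linarith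
    have hc := (convex_convexHull ℝ (setS p r 1)) hp hm ht0 ht1 (by ring)
    convert hc using 1
    case e'_4 => rfl
    funext x
    simp only [Pi.add_apply, Pi.smul_apply, smul_eq_mul]
    by_cases hx : x k0 = j0
    · rw [← Finset.mul_prod_erase Finset.univ (fun k => θ k (x k)) (Finset.mem_univ k0),
        ← Finset.mul_prod_erase Finset.univ (fun k => θp k (x k)) (Finset.mem_univ k0),
        ← Finset.mul_prod_erase Finset.univ (fun k => θm k (x k)) (Finset.mem_univ k0)]
      have hP : ∀ f : (k : Fin p) → Fin (r k) → ℝ,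
          (∀ (k : Fin p) (j : Fin (r k)), (⟨k, j⟩ : (k : Fin p) × Fin (r k)) ≠ ⟨k0, j0⟩ → f k j = θ k j) →
          ∏ k ∈ Finset.univ.erase k0, f k (x k) = ∏ k ∈ Finset.univ.erase k0, θ k (x k) := by
        intro f hf
        apply Finset.prod_congr rfl
        intro k hk
        have hk' : k ≠ k0 := (Finset.mem_erase.mp hk).1
        exact hf k (x k) (fun h => hk' (congrArg Sigma.fst h))
      have hPp := hP θp (fun k j h => (hne k j h).1)
      have hPm := hP θm (fun k j h => (hne k j h).2)
      simp only [hPp, hPm]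
      have h1 : θp k0 (x k0) = 1 := by rw [hx]; exact hval.1
      have h2 : θm k0 (x k0) = -1 := by rw [hx]; exact hval.2
      rw [h1, h2, hx, htdef]
      ring
    · have hgen : ∀ f : (k : Fin p) → Fin (r k) → ℝ,
          (∀ (k : Fin p) (j : Fin (r k)), (⟨k, j⟩ : (k : Fin p) × Fin (r k)) ≠ ⟨k0, j0⟩ → f k j = θ k j) →
          ∏ k, f k (x k) = ∏ k, θ k (x k) := by
        intro f hf
        apply Finset.prod_congr rfl
        intro k _
        apply hf
        intro h
        obtain ⟨h1, h2⟩ := Sigma.mk.inj_iff.mp h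
        subst h1
        exact hx (eq_of_heq h2)
      rw [hgen θp (fun k j h => (hne k j h).1), hgen θm (fun k j h => (hne k j h).2)]
      ring

theorem setC_nonempty (p : ℕ) (r : Fin p → ℕ) : (setC p r 1).Nonempty := by
  refine ⟨fun _ => 1, subset_convexHull ℝ _ ?_⟩
  exact ⟨fun _ _ => 1, fun k j => Or.inr rfl, fun x => by simp⟩

theorem rank1_mem (p : ℕ) (r : Fin p → ℕ) (hr : ∀ i, 1 ≤ r i)
    (ψ : ((i : Fin p) → Fin (r i)) → ℝ)
    (θ : (j : Fin p) → Fin (r j) → ℝ) (hψ : ∀ x, ψ x = ∏ j, θ j (x j)) :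
    ∃ m : ℝ, 0 ≤ m ∧ m ≤ maxNorm ψ ∧ ψ ∈ m • setC p r 1 := by
  classical
  haveI : ∀ i, Nonempty (Fin (r i)) := fun i => ⟨⟨0, hr i⟩⟩
  set M : (j : Fin p) → ℝ := fun j => Finset.univ.sup' Finset.univ_nonempty (fun i => |θ j i|)
    with hMdef
  have hMle : ∀ j i, |θ j i| ≤ M j := fun j i =>
    Finset.le_sup' (fun i => |θ j i|) (Finset.mem_univ i)
  have hM0 : ∀ j, 0 ≤ M j := fun j =>
    le_trans (abs_nonneg _) (hMle j (Classical.arbitrary _))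
  set m : ℝ := ∏ j, M j with hmdef
  have hm0 : 0 ≤ m := Finset.prod_nonneg (fun j _ => hM0 j)
  have hxs : ∀ j, ∃ i, M j = |θ j i| := by
    intro j
    obtain ⟨i, _, hi⟩ := Finset.exists_mem_eq_sup' Finset.univ_nonempty (fun i => |θ j i|)
    exact ⟨i, hi⟩
  set xs : (j : Fin p) → Fin (r j) := fun j => (hxs j).choose with hxsdef
  have hxval : |ψ xs| = m := by
    rw [hψ, Finset.abs_prod]
    exact Finset.prod_congr rfl (fun j _ => ((hxs j).choose_spec).symm)
  have hmle : m ≤ maxNorm ψ := by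
    rw [maxNorm, ← hxval]
    exact le_ciSup (f := fun x => |ψ x|) (Set.Finite.bddAbove (Set.finite_range _)) xs
  refine ⟨m, hm0, hmle, ?_⟩
  by_cases hM : ∀ j, M j ≠ 0
  · have hmne : m ≠ 0 := Finset.prod_ne_zero_iff.mpr (fun j _ => hM j)
    set θ' : (j : Fin p) → Fin (r j) → ℝ := fun j i => θ j i / M j with hθ'def
    have hbox : ∀ j i, -1 ≤ θ' j i ∧ θ' j i ≤ 1 := by
      intro j i
      rw [← abs_le, hθ'def]
      have hMpos : 0 < M j := lt_of_le_of_ne (hM0 j) (Ne.symm (hM j))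
      rw [abs_div, abs_of_pos hMpos, div_le_one hMpos]
      exact hMle j i
    refine ⟨fun x => ∏ j, θ' j (x j), box_mem_conv p r θ' hbox, ?_⟩
    funext x
    simp only [Pi.smul_apply, smul_eq_mul]
    rw [hψ, hθ'def]
    simp only
    rw [Finset.prod_div_distrib, ← hmdef, mul_div_cancel₀ _ hmne]
  · push_neg at hM
    obtain ⟨j0, hj0⟩ := hM
    have hθ0 : ∀ i, θ j0 i = 0 := by
      intro i
      have := hMle j0 i
      rw [hj0] at this
      exact abs_eq_zero.mp (le_antisymm this (abs_nonneg _))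
    have hψ0 : ψ = 0 := by
      funext x
      rw [hψ]
      exact Finset.prod_eq_zero (Finset.mem_univ j0) (hθ0 (x j0))
    have hm00 : m = 0 := Finset.prod_eq_zero (Finset.mem_univ j0) hj0
    rw [hψ0, hm00, zero_smul_set (setC_nonempty p r)]
    rfl

theorem sum_mem_smul (p : ℕ) (r : Fin p → ℕ) {q : ℕ}
    (F : Fin q → ((i : Fin p) → Fin (r i)) → ℝ) (m : Fin q → ℝ) (hm : ∀ k, 0 ≤ m k)
    (h : ∀ k, F k ∈ m k • setC p r 1) :
    (∑ k, F k) ∈ (∑ k, m k) • setC p r 1 := by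
  classical
  suffices hs : ∀ s : Finset (Fin q), (∑ k ∈ s, F k) ∈ (∑ k ∈ s, m k) • setC p r 1 by
    exact hs Finset.univ
  intro s
  induction s using Finset.cons_induction with
  | empty =>
    simp only [Finset.sum_empty]
    rw [zero_smul_set (setC_nonempty p r)]
    rfl
  | cons a s ha ih =>
    have hconv : Convex ℝ (setC p r 1) := convex_convexHull ℝ _
    rw [Finset.sum_cons, Finset.sum_cons,
      hconv.add_smul (hm a) (Finset.sum_nonneg (fun k _ => hm k))]
    exact Set.add_mem_add (h a) ih

theorem gaugeNorm_le_sum_maxNorm (p : ℕ) (hp : 1 ≤ p) (r : Fin p → ℕ) (hr : ∀ i, 1 ≤ r i)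
    (q : ℕ) (ψk : Fin q → ((i : Fin p) → Fin (r i)) → ℝ)
    (hrank1 : ∀ k, ∃ θ : (j : Fin p) → Fin (r j) → ℝ, ∀ x, ψk k x = ∏ j, θ j (x j))
    (ψ : ((i : Fin p) → Fin (r i)) → ℝ) (hψ : ψ = ∑ k, ψk k) :
    gaugeNorm ψ ≤ ∑ k, maxNorm (ψk k) := by
  classical
  have hch : ∀ k, ∃ m : ℝ, 0 ≤ m ∧ m ≤ maxNorm (ψk k) ∧ ψk k ∈ m • setC p r 1 := by
    intro k
    obtain ⟨θ, hθ⟩ := hrank1 k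
    exact rank1_mem p r hr (ψk k) θ hθ
  choose m hm0 hmle hmem using hch
  have hsum : ψ ∈ (∑ k, m k) • setC p r 1 := by
    rw [hψ]
    exact sum_mem_smul p r ψk m hm0 hmem
  have h1 : gaugeNorm ψ ≤ ∑ k, m k := by
    apply csInf_le
    · exact ⟨0, fun y hy => hy.1⟩
    · exact ⟨Finset.sum_nonneg (fun k _ => hm0 k), hsum⟩
  exact le_trans h1 (Finset.sum_le_sum (fun k _ => hmle k))
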